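/- Fix integers C and k with 1 ≤ k and k + 1 ≤ C, and fix a pair of indices (i, j) ∈ {1,…,C}². For every matrix F ∈ ℝ^{C×C}, the function t ↦ R_soft(F^{(t)}), where F^{(t)} agrees with F in all entries except that its (i,j) entry equals t, is convex on ℝ and admits a unique global minimizer. -/

import Mathlib

open Real Filter

/-- softmax of a vector `v ∈ ℝ^d`: `softmax v j = exp (v j) / ∑ m, exp (v m)`. -/
noncomputable def softmax {d : ℕ} (v : Fin d → ℝ) : Fin d → ℝ :=
  fun j => Real.exp (v j) / ∑ m, Real.exp (v m)

/-- The soft OKO risk: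
`R_soft(F) = −∑ᵢ ∑_{S ∈ 𝕐ᵢ} [2 log (softmax (2Fᵢ + ∑_{ℓ∈S} F_ℓ))ᵢ
  + ∑_{j∈S} log (softmax (2Fᵢ + ∑_{ℓ∈S} F_ℓ))ⱼ]`,
where `𝕐ᵢ` is the family of `k`-element subsets of `{1,…,C}` avoiding `i`. -/
noncomputable def Rsoft {C : ℕ} (k : ℕ) (F : Fin C → Fin C → ℝ) : ℝ :=
  -∑ i : Fin C,
    ∑ S ∈ Finset.univ.filter (fun S : Finset (Fin C) => S.card = k ∧ i ∉ S),
      (2 * Real.log (softmax (fun j => 2 * F i j + ∑ ℓ ∈ S, F ℓ j) i)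
        + ∑ j ∈ S, Real.log (softmax (fun m => 2 * F i m + ∑ ℓ ∈ S, F ℓ m) j))

lemma affine_convexOn (a c : ℝ) : ConvexOn ℝ Set.univ (fun t : ℝ => a * t + c) := by
  refine ⟨convex_univ, fun x _ y _ p q hp hq hpq => le_of_eq ?_⟩
  have hq' : q = 1 - p := by linarith
  subst hq'
  simp only [smul_eq_mul]
  ring

lemma lse_convex {n : ℕ} (hn : 0 < n) (c b : Fin n → ℝ) :
    ConvexOn ℝ Set.univ (fun t : ℝ => Real.log (∑ m, Real.exp (c m * t + b m))) := by
  set Z : ℝ → ℝ := fun t => ∑ m, Real.exp (c m * t + b m) with hZdef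
  have hZpos : ∀ t, 0 < Z t := fun t =>
    Finset.sum_pos (fun m _ => Real.exp_pos _) ⟨⟨0, hn⟩, Finset.mem_univ _⟩
  set Z1 : ℝ → ℝ := fun t => ∑ m, Real.exp (c m * t + b m) * c m with hZ1def
  set Z2 : ℝ → ℝ := fun t => ∑ m, Real.exp (c m * t + b m) * c m * c m with hZ2def
  have haff : ∀ (m : Fin n) (t : ℝ), HasDerivAt (fun t => c m * t + b m) (c m) t := by
    intro m t
    simpa using ((hasDerivAt_id t).const_mul (c m)).add_const (b m)
  have hZd : ∀ t, HasDerivAt Z (Z1 t) t := by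
    intro t
    exact HasDerivAt.fun_sum (fun m _ => ((haff m t).exp))
  have hZ1d : ∀ t, HasDerivAt Z1 (Z2 t) t := by
    intro t
    exact HasDerivAt.fun_sum (fun m _ => ((haff m t).exp.mul_const (c m)))
  set φ : ℝ → ℝ := fun t => Real.log (Z t) with hφdef
  set φ' : ℝ → ℝ := fun t => Z1 t / Z t with hφ'def
  have hφd : ∀ t, HasDerivAt φ (φ' t) t := fun t => (hZd t).log (hZpos t).ne'
  have hφ'd : ∀ t, HasDerivAt φ' ((Z2 t * Z t - Z1 t * Z1 t) / Z t ^ 2) t := by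
    intro t
    have := (hZ1d t).div (hZd t) (hZpos t).ne'
    exact this
  have hderiv : deriv φ = φ' := funext fun t => (hφd t).deriv
  have hCS : ∀ t, Z1 t ^ 2 ≤ Z2 t * Z t := by
    intro t
    have := Finset.sum_mul_sq_le_sq_mul_sq Finset.univ
      (fun m => c m * Real.sqrt (Real.exp (c m * t + b m)))
      (fun m => Real.sqrt (Real.exp (c m * t + b m)))
    have e1 : ∀ m : Fin n, (c m * Real.sqrt (Real.exp (c m * t + b m))) *
        Real.sqrt (Real.exp (c m * t + b m)) = Real.exp (c m * t + b m) * c m := by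
      intro m
      rw [mul_assoc, Real.mul_self_sqrt (Real.exp_nonneg _)]; ring
    have e2 : ∀ m : Fin n, (c m * Real.sqrt (Real.exp (c m * t + b m))) ^ 2
        = Real.exp (c m * t + b m) * c m * c m := by
      intro m
      rw [mul_pow, Real.sq_sqrt (Real.exp_nonneg _)]; ring
    have e3 : ∀ m : Fin n, (Real.sqrt (Real.exp (c m * t + b m))) ^ 2
        = Real.exp (c m * t + b m) := fun m => Real.sq_sqrt (Real.exp_nonneg _)
    simp only [hZ1def, hZ2def, hZdef]
    calc (∑ m, Real.exp (c m * t + b m) * c m) ^ 2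
        = (∑ m, (c m * Real.sqrt (Real.exp (c m * t + b m))) *
            Real.sqrt (Real.exp (c m * t + b m))) ^ 2 := by
          congr 1; exact Finset.sum_congr rfl fun m _ => (e1 m).symm
      _ ≤ (∑ m, (c m * Real.sqrt (Real.exp (c m * t + b m))) ^ 2) *
            ∑ m, (Real.sqrt (Real.exp (c m * t + b m))) ^ 2 := this
      _ = _ := by
          congr 1
          · exact Finset.sum_congr rfl fun m _ => e2 m
          · exact Finset.sum_congr rfl fun m _ => e3 m
  refine convexOn_of_deriv2_nonneg convex_univ ?_ ?_ ?_ ?_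
  · exact (Continuous.continuousOn (continuous_iff_continuousAt.2
      fun t => (hφd t).differentiableAt.continuousAt))
  · intro t _; exact (hφd t).differentiableAt.differentiableWithinAt
  · intro t _
    rw [hderiv]
    exact (hφ'd t).differentiableAt.differentiableWithinAt
  · intro t _
    have : deriv^[2] φ t = deriv (deriv φ) t := by
      simp [Function.iterate_succ, Function.iterate_one]
    rw [this, hderiv, (hφ'd t).deriv]
    have h1 : 0 ≤ Z2 t * Z t - Z1 t * Z1 t := by nlinarith [hCS t]
    positivity

lemma lse_strict (A B : ℝ) (hA : 0 < A) (hB : 0 < B) :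
    StrictConvexOn ℝ Set.univ (fun t : ℝ => Real.log (A * Real.exp (2 * t) + B)) := by
  set Z : ℝ → ℝ := fun t => A * Real.exp (2 * t) + B with hZdef
  have hZpos : ∀ t, 0 < Z t := fun t => by positivity
  set Z1 : ℝ → ℝ := fun t => A * (Real.exp (2 * t) * 2) with hZ1def
  have hZd : ∀ t, HasDerivAt Z (Z1 t) t := by
    intro t
    have h2t : HasDerivAt (fun t : ℝ => 2 * t) 2 t := by
      simpa using (hasDerivAt_id t).const_mul (2 : ℝ)
    exact ((h2t.exp).const_mul A).add_const B
  have hZ1d : ∀ t, HasDerivAt Z1 (A * (Real.exp (2 * t) * 2 * 2)) t := by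
    intro t
    have h2t : HasDerivAt (fun t : ℝ => 2 * t) 2 t := by
      simpa using (hasDerivAt_id t).const_mul (2 : ℝ)
    have := ((h2t.exp).mul_const 2).const_mul A
    simpa [mul_assoc] using this
  set φ : ℝ → ℝ := fun t => Real.log (Z t) with hφdef
  set φ' : ℝ → ℝ := fun t => Z1 t / Z t with hφ'def
  have hφd : ∀ t, HasDerivAt φ (φ' t) t := fun t => (hZd t).log (hZpos t).ne'
  have hφ'd : ∀ t, HasDerivAt φ'
      ((A * (Real.exp (2 * t) * 2 * 2) * Z t - Z1 t * Z1 t) / Z t ^ 2) t := by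
    intro t
    have := (hZ1d t).div (hZd t) (hZpos t).ne'
    exact this
  have hderiv : deriv φ = φ' := funext fun t => (hφd t).deriv
  refine strictConvexOn_of_deriv2_pos convex_univ ?_ ?_
  · exact (Continuous.continuousOn (continuous_iff_continuousAt.2
      fun t => (hφd t).differentiableAt.continuousAt))
  · intro t _
    have h2 : deriv^[2] φ t = deriv (deriv φ) t := by
      simp [Function.iterate_succ, Function.iterate_one]
    rw [h2, hderiv, (hφ'd t).deriv]
    have hnum : 0 < A * (Real.exp (2 * t) * 2 * 2) * Z t - Z1 t * Z1 t := by
      have he : 0 < Real.exp (2 * t) := Real.exp_pos _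
      simp only [hZdef, hZ1def]
      nlinarith [mul_pos (mul_pos hA hB) he]
    positivity


section OKO

variable {C : ℕ}

noncomputable def okoM (i j : Fin C) (F : Fin C → Fin C → ℝ) (t : ℝ) : Fin C → Fin C → ℝ :=
  fun a b => if a = i ∧ b = j then t else F a b

noncomputable def okoV (i j : Fin C) (F : Fin C → Fin C → ℝ) (i' : Fin C) (S : Finset (Fin C))
    (t : ℝ) : Fin C → ℝ :=
  fun m => 2 * okoM i j F t i' m + ∑ ℓ ∈ S, okoM i j F t ℓ m

noncomputable def okoC (i i' : Fin C) (S : Finset (Fin C)) : ℝ :=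
  (if i' = i then 2 else 0) + (if i ∈ S then 1 else 0)

noncomputable def okoD (i j i' : Fin C) (S : Finset (Fin C)) : ℝ :=
  okoC i i' S * ((if i' = j then 2 else 0) + (if j ∈ S then 1 else 0))

noncomputable def okoE (i j : Fin C) (F : Fin C → Fin C → ℝ) (i' : Fin C)
    (S : Finset (Fin C)) : ℝ :=
  2 * okoV i j F i' S 0 i' + ∑ j' ∈ S, okoV i j F i' S 0 j'

noncomputable def okoTerm (i j : Fin C) (F : Fin C → Fin C → ℝ) (i' : Fin C)
    (S : Finset (Fin C)) (t : ℝ) : ℝ :=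
  -(2 * Real.log (softmax (okoV i j F i' S t) i')
    + ∑ j' ∈ S, Real.log (softmax (okoV i j F i' S t) j'))

lemma Rsoft_decomp (k : ℕ) (i j : Fin C) (F : Fin C → Fin C → ℝ) (t : ℝ) :
    Rsoft k (okoM i j F t) = ∑ i' : Fin C,
      ∑ S ∈ Finset.univ.filter (fun S : Finset (Fin C) => S.card = k ∧ i' ∉ S),
        okoTerm i j F i' S t := by
  simp only [Rsoft, okoTerm, okoV, Finset.sum_neg_distrib]
  rfl

lemma sum_if_eq (S : Finset (Fin C)) (i : Fin C) (a : ℝ) (g : Fin C → ℝ) :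
    ∑ ℓ ∈ S, (if ℓ = i then a else g ℓ) = (if i ∈ S then a - g i else 0) + ∑ ℓ ∈ S, g ℓ := by
  have h : ∀ ℓ, (if ℓ = i then a else g ℓ) = (if ℓ = i then a - g ℓ else 0) + g ℓ := by
    intro ℓ; split_ifs with h
    · subst h; ring
    · ring
  rw [Finset.sum_congr rfl fun ℓ _ => h ℓ, Finset.sum_add_distrib,
    Finset.sum_ite_eq' S i (fun ℓ => a - g ℓ)]

lemma okoV_affine (i j : Fin C) (F : Fin C → Fin C → ℝ) (i' : Fin C) (S : Finset (Fin C))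
    (t : ℝ) (m : Fin C) :
    okoV i j F i' S t m = (if m = j then okoC i i' S else 0) * t + okoV i j F i' S 0 m := by
  unfold okoV okoM okoC
  by_cases hm : m = j
  · subst hm
    simp only [and_true, if_pos rfl, eq_self_iff_true]
    rw [sum_if_eq S i t (fun ℓ => F ℓ m), sum_if_eq S i 0 (fun ℓ => F ℓ m)]
    by_cases hii : i' = i <;> by_cases hiS : i ∈ S <;> simp [hii, hiS] <;> ring
  · simp [hm]

lemma okoTerm_eq (k : ℕ) (hC : 0 < C) (i j : Fin C) (F : Fin C → Fin C → ℝ) (i' : Fin C)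
    (S : Finset (Fin C)) (hcard : S.card = k) (t : ℝ) :
    okoTerm i j F i' S t = (2 + k : ℝ) * Real.log (∑ m, Real.exp (okoV i j F i' S t m))
      - (2 * okoV i j F i' S t i' + ∑ j' ∈ S, okoV i j F i' S t j') := by
  have hpos : 0 < ∑ m, Real.exp (okoV i j F i' S t m) :=
    Finset.sum_pos (fun _ _ => Real.exp_pos _) ⟨⟨0, hC⟩, Finset.mem_univ _⟩
  have hls : ∀ m, Real.log (softmax (okoV i j F i' S t) m)
      = okoV i j F i' S t m - Real.log (∑ m', Real.exp (okoV i j F i' S t m')) := by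
    intro m
    unfold softmax
    rw [Real.log_div (Real.exp_ne_zero _) hpos.ne', Real.log_exp]
  unfold okoTerm
  simp only [hls]
  rw [Finset.sum_sub_distrib, Finset.sum_const, hcard, nsmul_eq_mul]
  ring

lemma okoTerm_form (k : ℕ) (hC : 0 < C) (i j : Fin C) (F : Fin C → Fin C → ℝ) (i' : Fin C)
    (S : Finset (Fin C)) (hcard : S.card = k) (t : ℝ) :
    okoTerm i j F i' S t = (2 + k : ℝ) * Real.log
        (∑ m, Real.exp ((if m = j then okoC i i' S else 0) * t + okoV i j F i' S 0 m))
      - (okoD i j i' S * t + okoE i j F i' S) := by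
  rw [okoTerm_eq k hC i j F i' S hcard t]
  have h1 : (∑ m, Real.exp (okoV i j F i' S t m))
      = ∑ m, Real.exp ((if m = j then okoC i i' S else 0) * t + okoV i j F i' S 0 m) :=
    Finset.sum_congr rfl fun m _ => by rw [← okoV_affine]
  have h2 : 2 * okoV i j F i' S t i' + ∑ j' ∈ S, okoV i j F i' S t j'
      = okoD i j i' S * t + okoE i j F i' S := by
    rw [okoV_affine i j F i' S t i',
      Finset.sum_congr rfl fun j' (_ : j' ∈ S) => okoV_affine i j F i' S t j',
      Finset.sum_add_distrib, ← Finset.sum_mul,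
      Finset.sum_ite_eq' S j (fun _ => okoC i i' S)]
    unfold okoD okoE
    split_ifs <;> ring
  rw [h1, h2]

lemma convexOn_finset_sum {ι : Type*} (s : Finset ι) (f : ι → ℝ → ℝ)
    (h : ∀ x ∈ s, ConvexOn ℝ Set.univ (f x)) :
    ConvexOn ℝ Set.univ (fun t => ∑ x ∈ s, f x t) := by
  classical
  induction s using Finset.induction_on with
  | empty => simpa using convexOn_const (0 : ℝ) convex_univ
  | @insert a s ha ih =>
    simp only [Finset.sum_insert ha]
    exact (h a (Finset.mem_insert_self a s)).add (ih fun x hx => h x (Finset.mem_insert_of_mem hx))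

lemma strictConvexOn_smul' {f : ℝ → ℝ} {c : ℝ} (hc : 0 < c)
    (hf : StrictConvexOn ℝ Set.univ f) : StrictConvexOn ℝ Set.univ (fun x => c * f x) := by
  refine ⟨convex_univ, fun x _ y _ hxy p q hp hq hpq => ?_⟩
  have := hf.2 (Set.mem_univ x) (Set.mem_univ y) hxy hp hq hpq
  simp only [smul_eq_mul] at this ⊢
  nlinarith [this]

lemma okoTerm_convexOn (k : ℕ) {C : ℕ} (hC : 0 < C) (i j : Fin C) (F : Fin C → Fin C → ℝ)
    (i' : Fin C) (S : Finset (Fin C)) (hcard : S.card = k) :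
    ConvexOn ℝ Set.univ (fun t => okoTerm i j F i' S t) := by
  have hfe : (fun t => okoTerm i j F i' S t) = fun t => (2 + k : ℝ) •
      Real.log (∑ m, Real.exp ((if m = j then okoC i i' S else 0) * t + okoV i j F i' S 0 m))
      + (-(okoD i j i' S) * t + -(okoE i j F i' S)) := by
    funext t
    rw [okoTerm_form k hC i j F i' S hcard t]
    simp only [smul_eq_mul]
    ring
  rw [hfe]
  exact ((lse_convex hC (fun m => if m = j then okoC i i' S else 0)
      (fun m => okoV i j F i' S 0 m)).smul (by positivity)).add
    (affine_convexOn (-(okoD i j i' S)) (-(okoE i j F i' S)))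

lemma okoTerm_strictConvexOn (k : ℕ) {C : ℕ} (h2C : 2 ≤ C) (i j : Fin C)
    (F : Fin C → Fin C → ℝ) (S : Finset (Fin C)) (hcard : S.card = k) (hiS : i ∉ S) :
    StrictConvexOn ℝ Set.univ (fun t => okoTerm i j F i S t) := by
  have hC : 0 < C := by omega
  haveI : Nontrivial (Fin C) := Fin.nontrivial_iff_two_le.2 h2C
  have hc2 : okoC i i S = 2 := by simp [okoC, hiS]
  set b : Fin C → ℝ := fun m => okoV i j F i S 0 m with hb
  set A : ℝ := Real.exp (b j) with hA
  set B : ℝ := ∑ m ∈ Finset.univ.erase j, Real.exp (b m) with hB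
  have hApos : 0 < A := Real.exp_pos _
  obtain ⟨m₀, hm₀⟩ := exists_ne j
  have hBpos : 0 < B :=
    Finset.sum_pos (fun m _ => Real.exp_pos _)
      ⟨m₀, Finset.mem_erase.2 ⟨hm₀, Finset.mem_univ _⟩⟩
  have hsum : ∀ t : ℝ, (∑ m, Real.exp ((if m = j then okoC i i S else 0) * t + b m))
      = A * Real.exp (2 * t) + B := by
    intro t
    rw [← Finset.add_sum_erase _ _ (Finset.mem_univ j)]
    congr 1
    · rw [if_pos rfl, hc2, hA, ← Real.exp_add]
      ring_nf
    · exact Finset.sum_congr rfl fun m hm => by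
        rw [if_neg (Finset.mem_erase.1 hm).1, zero_mul, zero_add]
  have hfe : (fun t => okoTerm i j F i S t) = fun t => (2 + k : ℝ) *
      Real.log (A * Real.exp (2 * t) + B) + (-(okoD i j i S) * t + -(okoE i j F i S)) := by
    funext t
    rw [okoTerm_form k hC i j F i S hcard t, hsum t]
    ring
  rw [hfe]
  exact (strictConvexOn_smul' (by positivity) (lse_strict A B hApos hBpos)).add_convexOn
    (affine_convexOn (-(okoD i j i S)) (-(okoE i j F i S)))

lemma lse_ge {n : ℕ} (c b : Fin n → ℝ) (t : ℝ) (m₀ : Fin n) :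
    c m₀ * t + b m₀ ≤ Real.log (∑ m, Real.exp (c m * t + b m)) := by
  have h1 : Real.exp (c m₀ * t + b m₀) ≤ ∑ m, Real.exp (c m * t + b m) :=
    Finset.single_le_sum (f := fun m => Real.exp (c m * t + b m))
      (fun m _ => (Real.exp_pos _).le) (Finset.mem_univ m₀)
  calc c m₀ * t + b m₀ = Real.log (Real.exp (c m₀ * t + b m₀)) := (Real.log_exp _).symm
    _ ≤ _ := Real.log_le_log (Real.exp_pos _) h1

lemma okoTerm_ge (k : ℕ) {C : ℕ} (hC : 0 < C) (i j : Fin C) (F : Fin C → Fin C → ℝ)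
    (i' : Fin C) (S : Finset (Fin C)) (hcard : S.card = k) (m₀ : Fin C) (t : ℝ) :
    (2 + k : ℝ) * ((if m₀ = j then okoC i i' S else 0) * t + okoV i j F i' S 0 m₀)
      - (okoD i j i' S * t + okoE i j F i' S) ≤ okoTerm i j F i' S t := by
  rw [okoTerm_form k hC i j F i' S hcard t]
  have h := lse_ge (fun m => if m = j then okoC i i' S else 0)
    (fun m => okoV i j F i' S 0 m) t m₀
  have h2k : (0 : ℝ) ≤ 2 + k := by positivity
  have := mul_le_mul_of_nonneg_left h h2k
  linarith

lemma okoC_nonneg (i i' : Fin C) (S : Finset (Fin C)) : 0 ≤ okoC i i' S := by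
  unfold okoC; split_ifs <;> norm_num

lemma okoD_nonneg (i j i' : Fin C) (S : Finset (Fin C)) : 0 ≤ okoD i j i' S := by
  unfold okoD
  have := okoC_nonneg i i' S
  split_ifs <;> nlinarith

lemma okoD_le (k : ℕ) (hk : 1 ≤ k) (i j i' : Fin C) (S : Finset (Fin C)) :
    okoD i j i' S ≤ (2 + k : ℝ) * okoC i i' S := by
  unfold okoD
  have h0 := okoC_nonneg i i' S
  have hk' : (3 : ℝ) ≤ 2 + k := by
    have : (1 : ℝ) ≤ k := by exact_mod_cast hk
    linarith
  split_ifs <;> nlinarith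

set_option maxHeartbeats 1000000 in
/-- For fixed indices `(i, j)`, the soft OKO risk, viewed as a function of the single
entry `F_{i,j}` (all other entries fixed), is convex and admits a unique global
minimizer. -/
theorem Rsoft_coordinate_convex_unique_min {C k : ℕ} (hk : 1 ≤ k) (hkC : k + 1 ≤ C)
    (i j : Fin C) (F : Fin C → Fin C → ℝ) :
    ConvexOn ℝ Set.univ
        (fun t : ℝ => Rsoft k (fun a b => if a = i ∧ b = j then t else F a b))
      ∧ ∃! t₀ : ℝ, ∀ t : ℝ,
          Rsoft k (fun a b => if a = i ∧ b = j then t₀ else F a b)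
            ≤ Rsoft k (fun a b => if a = i ∧ b = j then t else F a b) := by
  classical
  have hC : 0 < C := by omega
  have h2C : 2 ≤ C := by omega
  haveI : Nontrivial (Fin C) := Fin.nontrivial_iff_two_le.2 h2C
  set Y : Fin C → Finset (Finset (Fin C)) :=
    fun i' => Finset.univ.filter (fun S : Finset (Fin C) => S.card = k ∧ i' ∉ S) with hY
  have hmem : ∀ (i' : Fin C) (S : Finset (Fin C)), S ∈ Y i' → S.card = k ∧ i' ∉ S := by
    intro i' S hS
    simpa [hY] using hS
  set f : ℝ → ℝ := fun t => Rsoft k (okoM i j F t) with hf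
  have hdecomp : ∀ t, f t = ∑ i' : Fin C, ∑ S ∈ Y i', okoTerm i j F i' S t :=
    fun t => Rsoft_decomp k i j F t
  -- the special subset S₀ avoiding i
  obtain ⟨S₀, hS₀sub, hS₀card⟩ := Finset.exists_subset_card_eq (s := Finset.univ.erase i) (n := k)
    (by rw [Finset.card_erase_of_mem (Finset.mem_univ i), Finset.card_univ, Fintype.card_fin]; omega)
  have hiS₀ : i ∉ S₀ := fun h => (Finset.mem_erase.1 (hS₀sub h)).1 rfl
  have hS₀Y : S₀ ∈ Y i := by simp [hY, hS₀card, hiS₀]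
  -- generic splitting of f
  have hsplit : ∀ (a : Fin C) (T : Finset (Fin C)), T ∈ Y a → ∀ t,
      f t = okoTerm i j F a T t + ((∑ S ∈ (Y a).erase T, okoTerm i j F a S t)
        + ∑ i' ∈ Finset.univ.erase a, ∑ S ∈ Y i', okoTerm i j F i' S t) := by
    intro a T hT t
    rw [hdecomp t, ← Finset.add_sum_erase Finset.univ _ (Finset.mem_univ a),
      ← Finset.add_sum_erase (Y a) _ hT]
    ring
  -- convexity
  have hconv : ConvexOn ℝ Set.univ f := by
    have := convexOn_finset_sum Finset.univ
      (fun i' t => ∑ S ∈ Y i', okoTerm i j F i' S t)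
      (fun i' _ => convexOn_finset_sum (Y i') (fun S t => okoTerm i j F i' S t)
        (fun S hS => okoTerm_convexOn k hC i j F i' S (hmem i' S hS).1))
    have hfe : f = fun t => ∑ i' : Fin C, ∑ S ∈ Y i', okoTerm i j F i' S t :=
      funext hdecomp
    rw [hfe]
    exact this
  -- strict convexity
  have hstrict : StrictConvexOn ℝ Set.univ f := by
    have hfe : f = fun t => okoTerm i j F i S₀ t + ((∑ S ∈ (Y i).erase S₀, okoTerm i j F i S t)
        + ∑ i' ∈ Finset.univ.erase i, ∑ S ∈ Y i', okoTerm i j F i' S t) :=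
      funext (hsplit i S₀ hS₀Y)
    rw [hfe]
    refine (okoTerm_strictConvexOn k h2C i j F S₀ hS₀card hiS₀).add_convexOn ?_
    refine (convexOn_finset_sum _ _ fun S hS => okoTerm_convexOn k hC i j F i S
      (hmem i S (Finset.mem_of_mem_erase hS)).1).add ?_
    exact convexOn_finset_sum _ _ fun i' _ => convexOn_finset_sum _ _
      fun S hS => okoTerm_convexOn k hC i j F i' S (hmem i' S hS).1
  -- continuity
  have hcont : Continuous f := by
    rw [← continuousOn_univ]
    exact hconv.continuousOn isOpen_univ
  -- lower bound constants
  set B1 : Fin C → Finset (Fin C) → ℝ :=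
    fun i' S => (2 + k : ℝ) * okoV i j F i' S 0 j - okoE i j F i' S with hB1def
  obtain ⟨ms, hms⟩ := exists_ne j
  set B2 : Fin C → Finset (Fin C) → ℝ :=
    fun i' S => (2 + k : ℝ) * okoV i j F i' S 0 ms - okoE i j F i' S with hB2def
  have hB1 : ∀ (i' : Fin C) (S : Finset (Fin C)), S ∈ Y i' → ∀ t : ℝ, 0 ≤ t →
      B1 i' S ≤ okoTerm i j F i' S t := by
    intro i' S hS t ht
    have hge := okoTerm_ge k hC i j F i' S (hmem i' S hS).1 j t
    rw [if_pos rfl] at hge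
    have hsl := okoD_le k hk i j i' S
    simp only [hB1def]
    nlinarith [mul_nonneg (sub_nonneg.2 hsl) ht]
  have hB2 : ∀ (i' : Fin C) (S : Finset (Fin C)), S ∈ Y i' → ∀ t : ℝ, t ≤ 0 →
      B2 i' S ≤ okoTerm i j F i' S t := by
    intro i' S hS t ht
    have hge := okoTerm_ge k hC i j F i' S (hmem i' S hS).1 ms t
    rw [if_neg hms] at hge
    have hD := okoD_nonneg i j i' S
    simp only [hB2def]
    nlinarith [mul_nonpos_of_nonneg_of_nonpos hD ht]
  -- special slope at +∞
  have hk' : (1 : ℝ) ≤ k := by exact_mod_cast hk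
  have hB1s : ∀ t : ℝ, 0 ≤ t → 2 * t + B1 i S₀ ≤ okoTerm i j F i S₀ t := by
    intro t ht
    have hge := okoTerm_ge k hC i j F i S₀ hS₀card j t
    rw [if_pos rfl] at hge
    have hslope : (2 : ℝ) ≤ (2 + k : ℝ) * okoC i i S₀ - okoD i j i S₀ := by
      unfold okoD okoC
      rw [if_pos rfl, if_neg hiS₀]
      by_cases hij : i = j
      · subst hij
        rw [if_pos rfl, if_neg hiS₀]
        linarith
      · rw [if_neg hij]
        split_ifs <;> nlinarith
    simp only [hB1def]
    nlinarith [mul_nonneg (by linarith : (0:ℝ) ≤ (2 + k : ℝ) * okoC i i S₀ - okoD i j i S₀ - 2) ht]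
  -- special pair at -∞
  obtain ⟨astar, Tstar, hTstarY, hDstar⟩ : ∃ (a : Fin C) (T : Finset (Fin C)),
      T ∈ Y a ∧ (2 : ℝ) ≤ okoD i j a T := by
    by_cases hij : j = i
    · refine ⟨i, S₀, hS₀Y, ?_⟩
      subst hij
      unfold okoD okoC
      simp only [if_pos rfl, if_neg hiS₀]
      norm_num
    · have hiA : {i} ⊆ Finset.univ.erase j := by
        intro x hx
        rw [Finset.mem_singleton] at hx
        subst hx
        exact Finset.mem_erase.2 ⟨fun h => hij h.symm, Finset.mem_univ _⟩
      obtain ⟨T, hTsub, hTsub', hTcard⟩ := Finset.exists_subsuperset_card_eq hiA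
        (n := k - 1 + ({i} : Finset (Fin C)).card) (by omega) (by
          rw [Finset.card_singleton, Finset.card_erase_of_mem (Finset.mem_univ j),
            Finset.card_univ, Fintype.card_fin]
          omega)
      have hTcard' : T.card = k := by
        rw [hTcard, Finset.card_singleton]; omega
      have hjT : j ∉ T := fun h => (Finset.mem_erase.1 (hTsub' h)).1 rfl
      have hiT : i ∈ T := hTsub (Finset.mem_singleton_self i)
      refine ⟨j, T, by simp [hY, hTcard', hjT], ?_⟩
      unfold okoD okoC
      rw [if_neg hij, if_pos hiT, if_pos rfl, if_neg hjT]
      norm_num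
  have hB2s : ∀ t : ℝ, t ≤ 0 → -2 * t + B2 astar Tstar ≤ okoTerm i j F astar Tstar t := by
    intro t ht
    have hge := okoTerm_ge k hC i j F astar Tstar (hmem astar Tstar hTstarY).1 ms t
    rw [if_neg hms] at hge
    simp only [hB2def]
    nlinarith [mul_nonneg (by linarith : (0:ℝ) ≤ okoD i j astar Tstar - 2) (by linarith : (0:ℝ) ≤ -t)]
  -- global lower bounds
  set K₁ : ℝ := B1 i S₀ + ((∑ S ∈ (Y i).erase S₀, B1 i S)
    + ∑ i' ∈ Finset.univ.erase i, ∑ S ∈ Y i', B1 i' S) with hK₁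
  have hglob1 : ∀ t : ℝ, 0 ≤ t → t + K₁ ≤ f t := by
    intro t ht
    have h₀ := hB1s t ht
    have h₁ : ∑ S ∈ (Y i).erase S₀, B1 i S ≤ ∑ S ∈ (Y i).erase S₀, okoTerm i j F i S t :=
      Finset.sum_le_sum fun S hS => hB1 i S (Finset.mem_of_mem_erase hS) t ht
    have h₂ : ∑ i' ∈ Finset.univ.erase i, ∑ S ∈ Y i', B1 i' S
        ≤ ∑ i' ∈ Finset.univ.erase i, ∑ S ∈ Y i', okoTerm i j F i' S t :=
      Finset.sum_le_sum fun i' _ => Finset.sum_le_sum fun S hS => hB1 i' S hS t ht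
    have := hsplit i S₀ hS₀Y t
    rw [this]
    have h2t : t ≤ 2 * t := by linarith
    simp only [hK₁]
    linarith
  set K₂ : ℝ := B2 astar Tstar + ((∑ S ∈ (Y astar).erase Tstar, B2 astar S)
    + ∑ i' ∈ Finset.univ.erase astar, ∑ S ∈ Y i', B2 i' S) with hK₂
  have hglob2 : ∀ t : ℝ, t ≤ 0 → -t + K₂ ≤ f t := by
    intro t ht
    have h₀ := hB2s t ht
    have h₁ : ∑ S ∈ (Y astar).erase Tstar, B2 astar S ≤ ∑ S ∈ (Y astar).erase Tstar, okoTerm i j F astar S t :=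
      Finset.sum_le_sum fun S hS => hB2 astar S (Finset.mem_of_mem_erase hS) t ht
    have h₂ : ∑ i' ∈ Finset.univ.erase astar, ∑ S ∈ Y i', B2 i' S
        ≤ ∑ i' ∈ Finset.univ.erase astar, ∑ S ∈ Y i', okoTerm i j F i' S t :=
      Finset.sum_le_sum fun i' _ => Finset.sum_le_sum fun S hS => hB2 i' S hS t ht
    rw [hsplit astar Tstar hTstarY t]
    have h2t : -t ≤ -2 * t := by linarith
    simp only [hK₂]
    linarith
  -- tendsto
  have htop : Tendsto f atTop atTop := by
    refine tendsto_atTop_mono' atTop ?_ (tendsto_atTop_add_const_right atTop K₁ tendsto_id)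
    filter_upwards [eventually_ge_atTop (0 : ℝ)] with t ht
    exact hglob1 t ht
  have hbot : Tendsto f atBot atTop := by
    have h1 : Tendsto (fun t : ℝ => -t) atBot atTop := tendsto_neg_atBot_atTop
    have hbase : Tendsto (fun t : ℝ => -t + K₂) atBot atTop :=
      tendsto_atTop_add_const_right atBot K₂ h1
    refine tendsto_atTop_mono' atBot ?_ hbase
    filter_upwards [eventually_le_atBot (0 : ℝ)] with t ht
    exact hglob2 t ht
  have hcoc : Tendsto f (cocompact ℝ) atTop := by
    rw [cocompact_eq_atBot_atTop]
    exact Filter.Tendsto.sup hbot htop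
  obtain ⟨t₀, ht₀⟩ := hcont.exists_forall_le hcoc
  refine ⟨hconv, t₀, fun t => ht₀ t, ?_⟩
  intro y hy
  have hy' : ∀ t, f y ≤ f t := hy
  by_contra hne
  have h1 : f ((1/2 : ℝ) • y + (1/2 : ℝ) • t₀) < (1/2 : ℝ) * f y + (1/2 : ℝ) * f t₀ :=
    hstrict.2 (Set.mem_univ y) (Set.mem_univ t₀) hne (by norm_num) (by norm_num) (by norm_num)
  have h2 : f t₀ ≤ f ((1/2 : ℝ) • y + (1/2 : ℝ) • t₀) := ht₀ _
  have h3 : f y ≤ f t₀ := hy' t₀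
  have h4 : f t₀ ≤ f y := ht₀ y
  linarith
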